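/- Let G be a non-trivial finitely generated group and consider the free product G∗ℤ = G∗⟨t⟩ with the finite generating set consisting of a finite generating set of G together with t, and associated word metric d. If w ∈ G∗ℤ is such that every minimum-length word for w ends with t, then the cone C(w) = {y ∈ G∗ℤ : d(1,y) = d(1,w) + d(w,y)} is an atom in 𝒜_{|w|}(G∗ℤ). Moreover, any two such atoms C(w), C(w') (for w, w' each ending with t) have the same type. -/

import Mathlib

open scoped Classical

noncomputable section

/-- The word length of `g` with respect to a generating set `S` (using letters from
`S ∪ S⁻¹`). -/
def wordLength {G : Type} [Group G] (S : Set G) (g : G) : ℕ :=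
  sInf {n | ∃ l : List G, l.length = n ∧ (∀ x ∈ l, x ∈ S ∨ x⁻¹ ∈ S) ∧ l.prod = g}

/-- The word metric on `G` with respect to `S`. -/
def wordDist {G : Type} [Group G] (S : Set G) (x y : G) : ℕ :=
  wordLength S (x⁻¹ * y)

/-- `p 0, p 1, …, p n` is a geodesic segment for the word metric. -/
def IsGeodesicSeg {G : Type} [Group G] (S : Set G) (p : ℕ → G) (n : ℕ) : Prop :=
  ∀ i j : ℕ, i ≤ j → j ≤ n → wordDist S (p i) (p j) = j - i

/-- The Cayley graph of `G` with respect to `S` is `δ`-hyperbolic: every side of every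
geodesic triangle lies in the `δ`-neighborhood of the union of the other two sides. -/
def SlimTriangles {G : Type} [Group G] (S : Set G) (δ : ℝ) : Prop :=
  ∀ (p q r : ℕ → G) (np nq nr : ℕ),
    IsGeodesicSeg S p np → IsGeodesicSeg S q nq → IsGeodesicSeg S r nr →
    p np = q 0 → q nq = r 0 → r nr = p 0 →
    ∀ i ≤ np, ∃ j : ℕ,
      (j ≤ nq ∧ (wordDist S (p i) (q j) : ℝ) ≤ δ) ∨
      (j ≤ nr ∧ (wordDist S (p i) (r j) : ℝ) ≤ δ)

/-- A group is hyperbolic if it has a finite generating set whose Cayley graph is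
`δ`-hyperbolic for some `δ > 0`. -/
def IsHyperbolicGroup (G : Type) [Group G] : Prop :=
  ∃ S : Set G, S.Finite ∧ Subgroup.closure S = ⊤ ∧ ∃ δ : ℝ, 0 < δ ∧ SlimTriangles S δ

/-- The ball of radius `n` about the identity. -/
def ball {G : Type} [Group G] (S : Set G) (n : ℕ) : Set G :=
  {x | wordLength S x ≤ n}

/-- `x ∼ y` for the ball `B_n`: the function `d_x - d_y` is constant on `B_n`. -/
def SameAtom {G : Type} [Group G] (S : Set G) (n : ℕ) (x y : G) : Prop :=
  ∀ a ∈ ball S n, ∀ b ∈ ball S n,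
    (wordDist S x a : ℤ) - (wordDist S y a : ℤ) =
      (wordDist S x b : ℤ) - (wordDist S y b : ℤ)

/-- The atom for `B_n` containing `x`. -/
def atomOf {G : Type} [Group G] (S : Set G) (n : ℕ) (x : G) : Set G :=
  {y | SameAtom S n x y}

/-- `𝒜_n(G)`: the infinite atoms for `B_n`. -/
def InfAtoms {G : Type} [Group G] (S : Set G) (n : ℕ) : Set (Set G) :=
  {A | (∃ x, A = atomOf S n x) ∧ A.Infinite}

/-- `g` is a morphism from the atom `A₁ ∈ 𝒜_m(G)` to the atom `A₂ ∈ 𝒜_n(G)`. -/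
def IsMorphism {G : Type} [Group G] (S : Set G) (g : G) (m : ℕ) (A₁ : Set G)
    (n : ℕ) (A₂ : Set G) : Prop :=
  ((g * ·) '' A₁ = A₂) ∧
  (∀ k : ℕ, (g * ·) '' (A₁ ∩ ball S (m + k)) = A₂ ∩ ball S (n + k)) ∧
  ∀ k : ℕ, 0 < k → ∀ A' ∈ InfAtoms S (m + k), A' ⊆ A₁ →
    (g * ·) '' A' ∈ InfAtoms S (n + k) ∧ (g * ·) '' A' ⊆ A₂

/-- Two atoms have the same type if there is a morphism between them. -/
def SameType {G : Type} [Group G] (S : Set G) (m : ℕ) (A₁ : Set G) (n : ℕ)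
    (A₂ : Set G) : Prop :=
  ∃ g : G, IsMorphism S g m A₁ n A₂

/-- `N(A)`: the set of points of `B_n` at which `d̄_A` attains its minimum, i.e. the set
of nearest neighbors in `B_n` of the points of `A`. -/
def nearestSet {G : Type} [Group G] (S : Set G) (n : ℕ) (A : Set G) : Set G :=
  {p | p ∈ ball S n ∧ ∀ x ∈ A, ∀ q ∈ ball S n, wordDist S x p ≤ wordDist S x q}
/-- The free product `G ∗ ℤ`. -/
abbrev FPZ (G : Type) [Group G] : Type := Monoid.Coprod G (Multiplicative ℤ)

/-- The generator `t` of the `ℤ` free factor. -/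
def tGen (G : Type) [Group G] : FPZ G := Monoid.Coprod.inr (Multiplicative.ofAdd 1)

/-- The generating set of `G ∗ ℤ`: a generating set of `G` together with `t`. -/
def fpGen (G : Type) [Group G] (S : Set G) : Set (FPZ G) :=
  (⇑(Monoid.Coprod.inl : G →* FPZ G) '' S) ∪ {tGen G}

/-- The cone `C(w) = {y : |y| = |w| + d(w,y)}`. -/
def coneOf {K : Type} [Group K] (T : Set K) (w : K) : Set K :=
  {y | wordLength T y = wordLength T w + wordDist T w y}

/-- Every minimum-length word for `w` (over the generating set of `G ∗ ℤ`) ends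
with `t`. -/
def EndsWithT (G : Type) [Group G] (S : Set G) (w : FPZ G) : Prop :=
  ∀ l : List (FPZ G), (∀ x ∈ l, x ∈ fpGen G S ∨ x⁻¹ ∈ fpGen G S) →
    l.prod = w → l.length = wordLength (fpGen G S) w → l.getLast? = some (tGen G)


namespace WL

variable {K : Type} [Group K] {T : Set K}

/-- `Gen T` : every element has a word. -/
def Gen (T : Set K) : Prop := ∀ g : K, ∃ l : List K, (∀ x ∈ l, x ∈ T ∨ x⁻¹ ∈ T) ∧ l.prod = g

theorem wl_le {g : K} {l : List K} (hl : ∀ x ∈ l, x ∈ T ∨ x⁻¹ ∈ T) (hp : l.prod = g) :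
    wordLength T g ≤ l.length :=
  Nat.sInf_le ⟨l, rfl, hl, hp⟩

theorem exists_geodesic (hT : Gen T) (g : K) :
    ∃ l : List K, l.length = wordLength T g ∧ (∀ x ∈ l, x ∈ T ∨ x⁻¹ ∈ T) ∧ l.prod = g := by
  have hne : {n | ∃ l : List K, l.length = n ∧ (∀ x ∈ l, x ∈ T ∨ x⁻¹ ∈ T) ∧ l.prod = g}.Nonempty := by
    obtain ⟨l, h1, h2⟩ := hT g
    exact ⟨l.length, l, rfl, h1, h2⟩
  exact Nat.sInf_mem hne

@[simp] theorem wl_one : wordLength T (1 : K) = 0 :=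
  Nat.le_zero.mp (wl_le (l := []) (by simp) (by simp))

theorem eq_one_of_wl_eq_zero (hT : Gen T) {g : K} (h : wordLength T g = 0) : g = 1 := by
  obtain ⟨l, hlen, _, hp⟩ := exists_geodesic hT g
  rw [h, List.length_eq_zero_iff] at hlen
  simp [hlen] at hp
  exact hp.symm

theorem wl_mul_le (hT : Gen T) (g h : K) :
    wordLength T (g * h) ≤ wordLength T g + wordLength T h := by
  obtain ⟨l1, hl1, hm1, hp1⟩ := exists_geodesic hT g
  obtain ⟨l2, hl2, hm2, hp2⟩ := exists_geodesic hT h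
  have := wl_le (g := g * h) (l := l1 ++ l2) (by
    intro x hx; rcases List.mem_append.mp hx with h | h
    · exact hm1 x h
    · exact hm2 x h) (by rw [List.prod_append, hp1, hp2])
  simpa [hl1, hl2] using this

theorem wl_inv_le (hT : Gen T) (g : K) : wordLength T g⁻¹ ≤ wordLength T g := by
  obtain ⟨l, hlen, hm, hp⟩ := exists_geodesic hT g
  have := wl_le (g := g⁻¹) (l := (l.map fun x => x⁻¹).reverse) (by
    intro x hx
    simp only [List.mem_reverse, List.mem_map] at hx
    obtain ⟨y, hy, rfl⟩ := hx
    rcases hm y hy with h | h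
    · right; simpa using h
    · left; exact h) (by
      rw [← hp, List.prod_inv_reverse])
  simpa [hlen] using this

theorem wl_inv (hT : Gen T) (g : K) : wordLength T g⁻¹ = wordLength T g :=
  le_antisymm (wl_inv_le hT g) (by simpa using wl_inv_le hT g⁻¹)

theorem wd_eq (x y : K) : wordDist T x y = wordLength T (x⁻¹ * y) := rfl

theorem wd_self (x : K) : wordDist T x x = 0 := by simp [wordDist]

theorem wd_left_inv (g x y : K) : wordDist T (g * x) (g * y) = wordDist T x y := by
  simp [wordDist, mul_assoc]

theorem wd_symm (hT : Gen T) (x y : K) : wordDist T x y = wordDist T y x := by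
  rw [wordDist, wordDist, ← wl_inv hT]
  simp

theorem wd_triangle (hT : Gen T) (x y z : K) :
    wordDist T x z ≤ wordDist T x y + wordDist T y z := by
  have := wl_mul_le hT (x⁻¹ * y) (y⁻¹ * z)
  simpa [wordDist, mul_assoc] using this

theorem wl_gen_le_one (hT : Gen T) {s : K} (hs : s ∈ T ∨ s⁻¹ ∈ T) : wordLength T s ≤ 1 := by
  simpa using wl_le (l := [s]) (by simpa using hs) (by simp)

end WL

namespace FP

open Monoid Monoid.CoprodI

variable (G : Type) [Group G]

@[reducible] def Mfac : Bool → Type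
  | false => G
  | true => Multiplicative ℤ

@[reducible] instance instGroupMfac : ∀ b, Group (Mfac G b)
  | false => inferInstanceAs (Group G)
  | true => inferInstanceAs (Group (Multiplicative ℤ))

abbrev KI := CoprodI (Mfac G)

abbrev Syl := Σ b, Mfac G b

variable {G}

theorem equiv_eq_of_prod {w : Word (Mfac G)} {z : KI G} (h : w.prod = z) :
    Word.equiv z = w := by
  subst h
  exact Word.equiv.apply_symm_apply w

theorem prod_equiv (z : KI G) : (Word.equiv z).prod = z :=
  Word.equiv.symm_apply_apply z

theorem eq_one_of_toList_nil {z : KI G} (h : (Word.equiv z).toList = []) : z = 1 := by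
  have := prod_equiv z
  rw [Word.prod, h] at this
  simpa using this.symm

def Q0 (z : KI G) : Prop :=
  ∃ m : Multiplicative ℤ,
    (Word.equiv z).toList.head? = some ⟨true, m⟩ ∧ 0 < Multiplicative.toAdd m

theorem Q0_one : ¬ Q0 (1 : KI G) := by
  rintro ⟨m, hm, -⟩
  have h0 : (Word.equiv (1 : KI G)) = Word.empty := equiv_eq_of_prod (by simp)
  rw [h0] at hm
  simp [Word.empty] at hm

theorem equiv_of {i : Bool} {m : Mfac G i} (hm : m ≠ 1) :
    (Word.equiv (of m)).toList = [⟨i, m⟩] := by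
  have : Word.equiv (of m) = ⟨[⟨i, m⟩], by simpa using hm, List.isChain_singleton _⟩ :=
    equiv_eq_of_prod (by simp [Word.prod])
  rw [this]

theorem Q0_of_true {m : Multiplicative ℤ} (hm : m ≠ 1) :
    Q0 (of (show Mfac G true from m)) ↔ 0 < Multiplicative.toAdd m := by
  constructor
  · rintro ⟨m', hm', hpos⟩
    rw [equiv_of hm] at hm'
    simp only [List.head?_cons, Option.some.injEq] at hm'
    obtain rfl : m = m' := eq_of_heq (Sigma.mk.inj_iff.mp hm').2
    exact hpos
  · intro hpos
    exact ⟨m, by rw [equiv_of hm]; rfl, hpos⟩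

theorem Q0_of_false (g : G) : ¬ Q0 (of (show Mfac G false from g)) := by
  by_cases hg : g = 1
  · subst hg
    rw [show (of (show Mfac G false from 1)) = (1 : KI G) by simp]
    exact Q0_one
  · rintro ⟨m, hm, -⟩
    rw [equiv_of hg] at hm
    simp only [List.head?_cons, Option.some.injEq] at hm
    exact (Bool.false_ne_true (Sigma.mk.inj_iff.mp hm).1)

/-- The product of the word with the given list is the given element. -/
theorem prod_toList_eq {z : KI G} {L : List (Σ b, Mfac G b)}
    (hL : (Word.equiv z).toList = L) :
    (L.map fun l => of l.2).prod = z := by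
  rw [← hL, ← Word.prod, prod_equiv]

/-- appending: last index of `z`'s word differs from `i`. -/
theorem equiv_mul_of_append {z : KI G} {L₀ : List (Σ b, Mfac G b)} {j : Bool}
    {x : Mfac G j} (hL : (Word.equiv z).toList = L₀ ++ [⟨j, x⟩])
    {i : Bool} (hij : j ≠ i) {m : Mfac G i} (hm : m ≠ 1) :
    (Word.equiv (z * of m)).toList = (L₀ ++ [⟨j, x⟩]) ++ [⟨i, m⟩] := by
  have hchain : List.IsChain (α := Syl G) (fun a b => a.1 ≠ b.1) ((L₀ ++ [⟨j, x⟩]) ++ [⟨i, m⟩]) := by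
    rw [List.isChain_append]
    refine ⟨by rw [← hL]; exact (Word.equiv z).chain_ne, List.isChain_singleton _, ?_⟩
    intro a ha b hb
    rw [List.getLast?_concat] at ha
    simp only [Option.mem_def, Option.some.injEq, List.head?_cons] at ha hb
    subst ha; subst hb
    exact hij
  have hne : ∀ l ∈ ((L₀ ++ [⟨j, x⟩]) ++ [⟨i, m⟩] : List (Syl G)), Sigma.snd l ≠ 1 := by
    intro l hl
    rcases List.mem_append.mp hl with h | h
    · exact (Word.equiv z).ne_one l (hL ▸ h)
    · simp only [List.mem_singleton] at h; subst h; exact hm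
  have : Word.equiv (z * of m) = ⟨_, hne, hchain⟩ := by
    apply equiv_eq_of_prod
    show ((((L₀ ++ [⟨j, x⟩]) ++ [⟨i, m⟩] : List (Syl G))).map fun l => of l.2).prod = z * of m
    rw [List.map_append, List.prod_append, prod_toList_eq hL]
    simp
  rw [this]

/-- merging: last syllable has index `i` and does not cancel. -/
theorem equiv_mul_of_merge {z : KI G} {L₀ : List (Σ b, Mfac G b)} {i : Bool}
    {x : Mfac G i} (hL : (Word.equiv z).toList = L₀ ++ [⟨i, x⟩])
    {m : Mfac G i} (hxm : x * m ≠ 1) :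
    (Word.equiv (z * of m)).toList = L₀ ++ [⟨i, x * m⟩] := by
  have hold := (Word.equiv z).chain_ne
  rw [hL, List.isChain_append] at hold
  have hchain : List.IsChain (α := Syl G) (fun a b => a.1 ≠ b.1) (L₀ ++ [⟨i, x * m⟩]) := by
    rw [List.isChain_append]
    exact ⟨hold.1, List.isChain_singleton _, by simpa using hold.2.2⟩
  have hne : ∀ l ∈ (L₀ ++ [⟨i, x * m⟩] : List (Syl G)), Sigma.snd l ≠ 1 := by
    intro l hl
    rcases List.mem_append.mp hl with h | h
    · exact (Word.equiv z).ne_one l (by rw [hL]; exact List.mem_append_left _ h)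
    · simp only [List.mem_singleton] at h; subst h; exact hxm
  have : Word.equiv (z * of m) = ⟨_, hne, hchain⟩ := by
    apply equiv_eq_of_prod
    show (((L₀ ++ [⟨i, x * m⟩] : List (Syl G))).map fun l => of l.2).prod = z * of m
    rw [List.map_append, List.prod_append, ← prod_toList_eq hL, List.map_append,
      List.prod_append]
    simp [mul_assoc]
  rw [this]

/-- cancelling: last syllable has index `i` and cancels with `m`. -/
theorem equiv_mul_of_cancel {z : KI G} {L₀ : List (Σ b, Mfac G b)} {i : Bool}
    {x : Mfac G i} (hL : (Word.equiv z).toList = L₀ ++ [⟨i, x⟩])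
    {m : Mfac G i} (hxm : x * m = 1) :
    (Word.equiv (z * of m)).toList = L₀ := by
  have hold := (Word.equiv z).chain_ne
  rw [hL, List.isChain_append] at hold
  have hne : ∀ l ∈ L₀, Sigma.snd l ≠ 1 := by
    intro l hl
    exact (Word.equiv z).ne_one l (by rw [hL]; exact List.mem_append_left _ hl)
  have : Word.equiv (z * of m) = ⟨L₀, hne, hold.1⟩ := by
    apply equiv_eq_of_prod
    show (L₀.map fun l => of l.2).prod = z * of m
    rw [← prod_toList_eq hL, List.map_append, List.prod_append]
    simp [mul_assoc, ← MonoidHom.map_mul, hxm]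
  rw [this]

def QH : Option (Syl G) → Prop := fun o =>
  ∃ m : Multiplicative ℤ, o = some ⟨true, m⟩ ∧ 0 < Multiplicative.toAdd m

theorem Q0_iff_QH (z : KI G) : Q0 z ↔ QH ((Word.equiv z).toList.head?) := Iff.rfl

theorem QH_none : ¬ QH (G := G) none := by rintro ⟨m, h, -⟩; simp at h

theorem QH_false (x : G) : ¬ QH (some (⟨false, x⟩ : Syl G)) := by
  rintro ⟨m, h, -⟩
  simp only [Option.some.injEq] at h
  exact Bool.false_ne_true (Sigma.mk.inj_iff.mp h).1

theorem QH_true (m : Multiplicative ℤ) :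
    QH (some (⟨true, m⟩ : Syl G)) ↔ 0 < Multiplicative.toAdd m := by
  constructor
  · rintro ⟨m', h, hpos⟩
    simp only [Option.some.injEq] at h
    obtain rfl : m = m' := eq_of_heq (Sigma.mk.inj_iff.mp h).2
    exact hpos
  · intro h; exact ⟨m, rfl, h⟩

theorem toAdd_ne_zero {x : Multiplicative ℤ} (hx : x ≠ 1) : Multiplicative.toAdd x ≠ 0 := by
  intro h
  apply hx
  have : x = Multiplicative.ofAdd 0 := by
    apply Multiplicative.toAdd.injective
    simpa using h
  simpa using this

theorem Q0_mul_of_false (z : KI G) (g : G) :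
    Q0 (z * of (show Mfac G false from g)) ↔ Q0 z := by
  by_cases hg : g = 1
  · subst hg
    rw [show (of (show Mfac G false from 1)) = (1 : KI G) from MonoidHom.map_one _, mul_one]
  rcases List.eq_nil_or_concat ((Word.equiv z).toList) with hnil | ⟨L₀, a, hL⟩
  · obtain rfl : z = 1 := eq_one_of_toList_nil hnil
    rw [one_mul]
    exact iff_of_false (Q0_of_false g) Q0_one
  rw [List.concat_eq_append] at hL
  rcases a with ⟨j, x⟩
  cases j
  · -- j = false
    by_cases hxg : x * (show Mfac G false from g) = 1
    · have hnew := equiv_mul_of_cancel (m := (show Mfac G false from g)) hL hxg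
      rcases L₀ with _ | ⟨a₀, L₀'⟩
      · refine iff_of_false ?_ ?_
        · rw [Q0_iff_QH, hnew]; exact QH_none
        · rw [Q0_iff_QH, hL]; simpa using QH_false x
      · rw [Q0_iff_QH, Q0_iff_QH, hnew, hL]
        simp
    · have hnew := equiv_mul_of_merge (m := (show Mfac G false from g)) hL hxg
      rcases L₀ with _ | ⟨a₀, L₀'⟩
      · refine iff_of_false ?_ ?_
        · rw [Q0_iff_QH, hnew]; simpa using QH_false (x * g)
        · rw [Q0_iff_QH, hL]; simpa using QH_false x
      · rw [Q0_iff_QH, Q0_iff_QH, hnew, hL]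
        simp
  · -- j = true
    have hnew := equiv_mul_of_append hL (i := false) (by simp) (show (show Mfac G false from g) ≠ 1 from hg)
    rw [Q0_iff_QH, Q0_iff_QH, hnew, hL,
      List.head?_append_of_ne_nil _ (by simp : L₀ ++ [(⟨true, x⟩ : Syl G)] ≠ [])]

theorem Q0_mul_of_true (z : KI G) (c : Multiplicative ℤ)
    (hc : Multiplicative.toAdd c = 1 ∨ Multiplicative.toAdd c = -1)
    (hflip : ¬ (Q0 (z * of (show Mfac G true from c)) ↔ Q0 z)) :
    (z = 1 ∧ z * of (show Mfac G true from c) = of (show Mfac G true from Multiplicative.ofAdd (1 : ℤ))) ∨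
    (z = of (show Mfac G true from Multiplicative.ofAdd (1 : ℤ)) ∧
      z * of (show Mfac G true from c) = 1) := by
  have hc1 : c ≠ 1 := by
    intro h; subst h; simp at hc
  rcases List.eq_nil_or_concat ((Word.equiv z).toList) with hnil | ⟨L₀, a, hL⟩
  · obtain rfl : z = 1 := eq_one_of_toList_nil hnil
    rw [one_mul] at hflip ⊢
    have h1 : Q0 (of (show Mfac G true from c)) ↔ 0 < Multiplicative.toAdd c := Q0_of_true hc1
    have h2 : ¬ Q0 (1 : KI G) := Q0_one
    have hpos : 0 < Multiplicative.toAdd c := by tauto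
    have : Multiplicative.toAdd c = 1 := by omega
    have : c = Multiplicative.ofAdd 1 := by
      apply Multiplicative.toAdd.injective; simpa using this
    subst this
    exact Or.inl ⟨rfl, rfl⟩
  rw [List.concat_eq_append] at hL
  rcases a with ⟨j, x⟩
  cases j
  · -- last syllable in G: append
    exfalso
    have hnew := equiv_mul_of_append hL (i := true) (by simp) (show (show Mfac G true from c) ≠ 1 from hc1)
    apply hflip
    rw [Q0_iff_QH, Q0_iff_QH, hnew, hL,
      List.head?_append_of_ne_nil _ (by simp : L₀ ++ [(⟨false, x⟩ : Syl G)] ≠ [])]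
  · -- last syllable is a power of t
    have hxne : x ≠ 1 := (Word.equiv z).ne_one ⟨true, x⟩ (by rw [hL]; simp)
    by_cases hxc : x * (show Mfac G true from c) = 1
    · have hnew := equiv_mul_of_cancel (m := (show Mfac G true from c)) hL hxc
      rcases L₀ with _ | ⟨a₀, L₀'⟩
      · have hz : z = of x := by
          have := prod_toList_eq hL
          simpa using this.symm
        have hz1 : z * of (show Mfac G true from c) = 1 := by
          rw [hz, ← MonoidHom.map_mul, hxc, MonoidHom.map_one]
        have hQz : Q0 z ↔ 0 < Multiplicative.toAdd x := by rw [hz]; exact Q0_of_true hxne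
        have hQnew : ¬ Q0 (z * of (show Mfac G true from c)) := by rw [hz1]; exact Q0_one
        have hpos : 0 < Multiplicative.toAdd x := by tauto
        have hsum : Multiplicative.toAdd x + Multiplicative.toAdd c = 0 := by
          have : Multiplicative.toAdd (x * c) = 0 := by rw [hxc]; simp
          simpa using this
        have : Multiplicative.toAdd x = 1 := by omega
        have hx1 : x = Multiplicative.ofAdd 1 := by
          apply Multiplicative.toAdd.injective; simpa using this
        right
        exact ⟨by rw [hz, hx1], hz1⟩
      · exfalso
        apply hflip
        rw [Q0_iff_QH, Q0_iff_QH, hnew, hL]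
        simp
    · have hnew := equiv_mul_of_merge (m := (show Mfac G true from c)) hL hxc
      exfalso
      apply hflip
      rcases L₀ with _ | ⟨a₀, L₀'⟩
      · rw [Q0_iff_QH, Q0_iff_QH, hnew, hL]
        simp only [List.nil_append, List.head?_cons, QH_true]
        have h1 : Multiplicative.toAdd x ≠ 0 := toAdd_ne_zero hxne
        have h2 : Multiplicative.toAdd (x * c) ≠ 0 := toAdd_ne_zero hxc
        have h3 : Multiplicative.toAdd (x * c)
            = Multiplicative.toAdd x + Multiplicative.toAdd c := rfl
        rw [h3] at h2 ⊢
        omega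
      · rw [Q0_iff_QH, Q0_iff_QH, hnew, hL]
        simp

end FP

namespace FP2

open Monoid FP WL

variable {G : Type} [Group G]

def fwd (G : Type) [Group G] : FPZ G →* KI G :=
  Monoid.Coprod.lift (CoprodI.of (M := Mfac G) (i := false)) (CoprodI.of (M := Mfac G) (i := true))

def bwd (G : Type) [Group G] : KI G →* FPZ G :=
  CoprodI.lift (fun b => match b with
    | false => Monoid.Coprod.inl
    | true => Monoid.Coprod.inr)

theorem bwd_fwd (x : FPZ G) : bwd G (fwd G x) = x := by
  have : (bwd G).comp (fwd G) = MonoidHom.id _ := by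
    apply Monoid.Coprod.hom_ext <;> ext x <;> simp [fwd, bwd]
  exact DFunLike.congr_fun this x

theorem fwd_bwd (x : KI G) : fwd G (bwd G x) = x := by
  have : (fwd G).comp (bwd G) = MonoidHom.id _ := by
    apply CoprodI.ext_hom
    rintro (_ | _) <;> ext x <;> simp [fwd, bwd]
  exact DFunLike.congr_fun this x

theorem fwd_injective : Function.Injective (fwd G) :=
  Function.LeftInverse.injective bwd_fwd

theorem fwd_inl (g : G) : fwd G (Monoid.Coprod.inl g) = CoprodI.of (show Mfac G false from g) := by
  simp [fwd]

theorem fwd_inr (m : Multiplicative ℤ) :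
    fwd G (Monoid.Coprod.inr m) = CoprodI.of (show Mfac G true from m) := by
  simp [fwd]

theorem fwd_tGen : fwd G (tGen G) = CoprodI.of (show Mfac G true from Multiplicative.ofAdd (1 : ℤ)) :=
  fwd_inr _

/-- The base predicate `Q`. -/
def Qp (z : FPZ G) : Prop := Q0 (fwd G z)

theorem Qp_one : ¬ Qp (1 : FPZ G) := by
  rw [Qp, MonoidHom.map_one]
  exact Q0_one

theorem Qp_tGen_pow {k : ℕ} (hk : 1 ≤ k) : Qp ((tGen G) ^ k) := by
  rw [Qp, MonoidHom.map_pow, fwd_tGen, ← MonoidHom.map_pow]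
  have h1 : ((show Mfac G true from Multiplicative.ofAdd (1 : ℤ)) ^ k)
      = (show Mfac G true from Multiplicative.ofAdd (k : ℤ)) := by
    show (Multiplicative.ofAdd (1 : ℤ)) ^ k = Multiplicative.ofAdd (k : ℤ)
    rw [← ofAdd_nsmul]
    simp
  rw [h1]
  rw [Q0_of_true (by
    show Multiplicative.ofAdd (k : ℤ) ≠ 1
    simp only [ne_eq, ofAdd_eq_one, Int.natCast_eq_zero]
    omega)]
  show (0 : ℤ) < Multiplicative.toAdd (Multiplicative.ofAdd (k : ℤ))
  simpa using by exact_mod_cast hk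

theorem Qp_tGen : Qp (tGen G) := by simpa using Qp_tGen_pow (G := G) (k := 1) le_rfl

theorem tGen_pow_injective : Function.Injective (fun k : ℕ => (tGen G) ^ k) := by
  intro j k h
  simp only at h
  have := congrArg (fwd G) h
  rw [MonoidHom.map_pow, MonoidHom.map_pow, fwd_tGen, ← MonoidHom.map_pow, ← MonoidHom.map_pow] at this
  have h2 := CoprodI.of_injective (i := true) (M := Mfac G) this
  have h3 : Multiplicative.ofAdd ((j : ℤ)) = Multiplicative.ofAdd ((k : ℤ)) := by
    have hj : (show Mfac G true from Multiplicative.ofAdd (1 : ℤ)) ^ j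
        = (show Mfac G true from Multiplicative.ofAdd (j : ℤ)) := by
      show (Multiplicative.ofAdd (1 : ℤ)) ^ j = Multiplicative.ofAdd (j : ℤ)
      rw [← ofAdd_nsmul]; simp
    have hk : (show Mfac G true from Multiplicative.ofAdd (1 : ℤ)) ^ k
        = (show Mfac G true from Multiplicative.ofAdd (k : ℤ)) := by
      show (Multiplicative.ofAdd (1 : ℤ)) ^ k = Multiplicative.ofAdd (k : ℤ)
      rw [← ofAdd_nsmul]; simp
    rw [hj, hk] at h2
    exact h2
  have := Multiplicative.ofAdd.injective h3
  exact_mod_cast this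

/-- classification of generators and their inverses -/
theorem gen_classify {S : Set G} {s : FPZ G} (hs : s ∈ fpGen G S ∨ s⁻¹ ∈ fpGen G S) :
    (∃ g : G, s = Monoid.Coprod.inl g) ∨ s = tGen G ∨ s = (tGen G)⁻¹ := by
  rcases hs with h | h <;> rcases h with h | h
  · obtain ⟨g, -, rfl⟩ := h
    exact Or.inl ⟨g, rfl⟩
  · rw [Set.mem_singleton_iff] at h
    exact Or.inr (Or.inl h)
  · obtain ⟨g, -, hg⟩ := h
    left
    exact ⟨g⁻¹, by rw [MonoidHom.map_inv, hg, inv_inv]⟩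
  · rw [Set.mem_singleton_iff] at h
    right; right
    rw [← h, inv_inv]

/-- The crossing lemma in `G ∗ ℤ`. -/
theorem crossing {S : Set G} {z s : FPZ G} (hs : s ∈ fpGen G S ∨ s⁻¹ ∈ fpGen G S)
    (hflip : ¬ (Qp (z * s) ↔ Qp z)) :
    (z = 1 ∧ z * s = tGen G) ∨ (z = tGen G ∧ z * s = 1) := by
  rcases gen_classify hs with ⟨g, rfl⟩ | rfl | rfl
  · exfalso
    apply hflip
    rw [Qp, Qp, MonoidHom.map_mul, fwd_inl]
    exact Q0_mul_of_false _ g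
  · have := Q0_mul_of_true (fwd G z) (Multiplicative.ofAdd (1 : ℤ)) (by simp)
      (by rw [Qp, Qp, MonoidHom.map_mul, fwd_tGen] at hflip; exact hflip)
    rw [← fwd_tGen, ← MonoidHom.map_mul] at this
    rcases this with ⟨h1, h2⟩ | ⟨h1, h2⟩
    · left
      refine ⟨fwd_injective (by rw [h1, MonoidHom.map_one]), fwd_injective (by rw [h2, fwd_tGen])⟩
    · right
      refine ⟨fwd_injective (by rw [h1, fwd_tGen]), fwd_injective (by rw [h2, MonoidHom.map_one])⟩
  · have hinv : fwd G ((tGen G)⁻¹)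
        = CoprodI.of (show Mfac G true from Multiplicative.ofAdd (-1 : ℤ)) := by
      rw [MonoidHom.map_inv, fwd_tGen, ← MonoidHom.map_inv]
      rfl
    have := Q0_mul_of_true (fwd G z) (Multiplicative.ofAdd (-1 : ℤ)) (by simp)
      (by rw [Qp, Qp, MonoidHom.map_mul, hinv] at hflip; exact hflip)
    rw [← hinv, ← MonoidHom.map_mul] at this
    rcases this with ⟨h1, h2⟩ | ⟨h1, h2⟩
    · left
      refine ⟨fwd_injective (by rw [h1, MonoidHom.map_one]), fwd_injective (by rw [h2, fwd_tGen])⟩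
    · right
      refine ⟨fwd_injective (by rw [h1, fwd_tGen]), fwd_injective (by rw [h2, MonoidHom.map_one])⟩

/-- The generating set generates. -/
theorem gen_fpGen {S : Set G} (hgen : Subgroup.closure S = ⊤) : WL.Gen (fpGen G S) := by
  have htop : ∀ x : FPZ G, x ∈ Subgroup.closure (fpGen G S) := by
    intro x
    induction x using Monoid.Coprod.induction_on with
    | inl m =>
      have hm : m ∈ Subgroup.closure S := by rw [hgen]; trivial
      have : Monoid.Coprod.inl m ∈ (Subgroup.closure S).map (Monoid.Coprod.inl (N := Multiplicative ℤ)) :=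
        Subgroup.mem_map.mpr ⟨m, hm, rfl⟩
      rw [MonoidHom.map_closure] at this
      exact Subgroup.closure_mono Set.subset_union_left this
    | inr n =>
      have hmem : tGen G ∈ Subgroup.closure (fpGen G S) :=
        Subgroup.subset_closure (Set.mem_union_right _ rfl)
      have : Monoid.Coprod.inr n = (tGen G) ^ (Multiplicative.toAdd n) := by
        rw [tGen, ← MonoidHom.map_zpow]
        congr 1
        rw [← ofAdd_zsmul]
        simp
      rw [this]
      exact Subgroup.zpow_mem _ hmem _
    | mul x y hx hy => exact Subgroup.mul_mem _ hx hy
  intro g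
  have hg : g ∈ Subgroup.closure (fpGen G S) := htop g
  rw [← Subgroup.mem_toSubmonoid, Subgroup.closure_toSubmonoid] at hg
  obtain ⟨l, hl, hp⟩ := Submonoid.exists_list_of_mem_closure hg
  refine ⟨l, ?_, hp⟩
  intro x hx
  rcases hl x hx with h | h
  · exact Or.inl h
  · exact Or.inr (by simpa using h)

end FP2

namespace FPG

open WL FP FP2

variable {G : Type} [Group G] {S : Set G}

/-- `x` lies strictly beyond `w` across the bridge. -/
def Pw (w x : FPZ G) : Prop := Qp (tGen G * w⁻¹ * x)

theorem Pw_w (w : FPZ G) : Pw w w := by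
  have h : tGen G * w⁻¹ * w = tGen G := by group
  rw [Pw, h]; exact Qp_tGen

theorem Pw_v (w : FPZ G) : ¬ Pw w (w * (tGen G)⁻¹) := by
  have h : tGen G * w⁻¹ * (w * (tGen G)⁻¹) = 1 := by group
  rw [Pw, h]; exact Qp_one

theorem Pw_pow (w : FPZ G) (k : ℕ) : Pw w (w * (tGen G) ^ k) := by
  have h : tGen G * w⁻¹ * (w * (tGen G) ^ k) = (tGen G) ^ (k + 1) := by
    rw [pow_succ']; group
  rw [Pw, h]; exact Qp_tGen_pow (by omega)

theorem Pw_cross {w x s : FPZ G} (hs : s ∈ fpGen G S ∨ s⁻¹ ∈ fpGen G S)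
    (hflip : ¬ (Pw w (x * s) ↔ Pw w x)) :
    (x = w * (tGen G)⁻¹ ∧ x * s = w) ∨ (x = w ∧ x * s = w * (tGen G)⁻¹) := by
  have h2 : tGen G * w⁻¹ * (x * s) = (tGen G * w⁻¹ * x) * s := by group
  have hcross := crossing (S := S) hs (z := tGen G * w⁻¹ * x)
    (by rw [← h2]; exact hflip)
  rcases hcross with ⟨h3, h4⟩ | ⟨h3, h4⟩
  · left
    constructor
    · calc x = (tGen G * w⁻¹)⁻¹ * (tGen G * w⁻¹ * x) := by group
        _ = (tGen G * w⁻¹)⁻¹ * 1 := by rw [h3]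
        _ = w * (tGen G)⁻¹ := by group
    · calc x * s = (tGen G * w⁻¹)⁻¹ * ((tGen G * w⁻¹ * x) * s) := by group
        _ = (tGen G * w⁻¹)⁻¹ * tGen G := by rw [h4]
        _ = w := by group
  · right
    constructor
    · calc x = (tGen G * w⁻¹)⁻¹ * (tGen G * w⁻¹ * x) := by group
        _ = (tGen G * w⁻¹)⁻¹ * tGen G := by rw [h3]
        _ = w := by group
    · calc x * s = (tGen G * w⁻¹)⁻¹ * ((tGen G * w⁻¹ * x) * s) := by group
        _ = (tGen G * w⁻¹)⁻¹ * 1 := by rw [h4]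
        _ = w * (tGen G)⁻¹ := by group

theorem tGen_mem : tGen G ∈ fpGen G S := Set.mem_union_right _ rfl

theorem split (hT : Gen (fpGen G S)) (w : FPZ G) :
    ∀ (l : List (FPZ G)) (x a : FPZ G), (∀ s ∈ l, s ∈ fpGen G S ∨ s⁻¹ ∈ fpGen G S) →
      Pw w x → ¬ Pw w a → x * l.prod = a →
      wordDist (fpGen G S) x w + 1 + wordDist (fpGen G S) (w * (tGen G)⁻¹) a ≤ l.length := by
  intro l
  induction l with
  | nil =>
    intro x a _ hx ha hp
    simp only [List.prod_nil, mul_one] at hp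
    exact absurd (hp ▸ hx) ha
  | cons s l ih =>
    intro x a hok hx ha hp
    have hs : s ∈ fpGen G S ∨ s⁻¹ ∈ fpGen G S := hok s (by simp)
    have hok' : ∀ u ∈ l, u ∈ fpGen G S ∨ u⁻¹ ∈ fpGen G S := fun u hu => hok u (by simp [hu])
    have hp' : (x * s) * l.prod = a := by rw [← hp, List.prod_cons]; group
    by_cases hq : Pw w (x * s)
    · have := ih (x * s) a hok' hq ha hp'
      have hstep : wordDist (fpGen G S) x w
          ≤ 1 + wordDist (fpGen G S) (x * s) w := by
        have tri := wd_triangle hT (T := fpGen G S) x (x * s) w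
        have hxxs : wordDist (fpGen G S) x (x * s) ≤ 1 := by
          rw [wordDist]
          have : x⁻¹ * (x * s) = s := by group
          rw [this]
          exact wl_gen_le_one hT hs
        omega
      simp only [List.length_cons]
      omega
    · have hcr := Pw_cross (w := w) hs (fun hiff => hq (hiff.mpr hx))
      rcases hcr with ⟨h1, h2⟩ | ⟨h1, h2⟩
      · exact absurd (h1 ▸ hx) (Pw_v w)
      · have hda : wordDist (fpGen G S) (w * (tGen G)⁻¹) a ≤ l.length := by
          rw [← h2, wordDist]
          apply wl_le hok'
          calc l.prod = (x * s)⁻¹ * ((x * s) * l.prod) := by group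
            _ = (x * s)⁻¹ * a := by rw [hp']
        have hdx : wordDist (fpGen G S) x w = 0 := by rw [h1, wd_self]
        simp only [List.length_cons]
        omega

theorem split' (hT : Gen (fpGen G S)) (w : FPZ G) :
    ∀ (l : List (FPZ G)) (x a : FPZ G), (∀ s ∈ l, s ∈ fpGen G S ∨ s⁻¹ ∈ fpGen G S) →
      ¬ Pw w x → Pw w a → x * l.prod = a →
      wordDist (fpGen G S) x (w * (tGen G)⁻¹) + 1 + wordDist (fpGen G S) w a ≤ l.length := by
  intro l
  induction l with
  | nil =>
    intro x a _ hx ha hp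
    simp only [List.prod_nil, mul_one] at hp
    exact absurd (hp ▸ hx) (by simpa using ha)
  | cons s l ih =>
    intro x a hok hx ha hp
    have hs : s ∈ fpGen G S ∨ s⁻¹ ∈ fpGen G S := hok s (by simp)
    have hok' : ∀ u ∈ l, u ∈ fpGen G S ∨ u⁻¹ ∈ fpGen G S := fun u hu => hok u (by simp [hu])
    have hp' : (x * s) * l.prod = a := by rw [← hp, List.prod_cons]; group
    by_cases hq : Pw w (x * s)
    · have hcr := Pw_cross (w := w) hs (fun hiff => hx (hiff.mp hq))
      rcases hcr with ⟨h1, h2⟩ | ⟨h1, h2⟩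
      · have hda : wordDist (fpGen G S) w a ≤ l.length := by
          rw [← h2, wordDist]
          apply wl_le hok'
          calc l.prod = (x * s)⁻¹ * ((x * s) * l.prod) := by group
            _ = (x * s)⁻¹ * a := by rw [hp']
        have hdx : wordDist (fpGen G S) x (w * (tGen G)⁻¹) = 0 := by rw [h1, wd_self]
        simp only [List.length_cons]
        omega
      · exact absurd (h1 ▸ Pw_w w) hx
    · have := ih (x * s) a hok' hq ha hp'
      have hstep : wordDist (fpGen G S) x (w * (tGen G)⁻¹)
          ≤ 1 + wordDist (fpGen G S) (x * s) (w * (tGen G)⁻¹) := by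
        have tri := wd_triangle hT (T := fpGen G S) x (x * s) (w * (tGen G)⁻¹)
        have hxxs : wordDist (fpGen G S) x (x * s) ≤ 1 := by
          rw [wordDist]
          have : x⁻¹ * (x * s) = s := by group
          rw [this]
          exact wl_gen_le_one hT hs
        omega
      simp only [List.length_cons]
      omega

theorem v_len (hT : Gen (fpGen G S)) {w : FPZ G} (hw : EndsWithT G S w) :
    wordLength (fpGen G S) (w * (tGen G)⁻¹) + 1 = wordLength (fpGen G S) w := by
  obtain ⟨l, hlen, hok, hp⟩ := exists_geodesic hT w
  have hlast := hw l hok hp hlen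
  have hne : l ≠ [] := by intro h; rw [h] at hlast; simp at hlast
  obtain ⟨hh, hx⟩ := List.mem_getLast?_eq_getLast (show tGen G ∈ l.getLast? by rw [hlast]; rfl)
  have hsplit : l.dropLast ++ [tGen G] = l := by
    rw [hx]; exact List.dropLast_append_getLast hh
  have hprod : l.dropLast.prod * tGen G = w := by
    rw [← hp, ← hsplit]; simp
  have h1 : wordLength (fpGen G S) (w * (tGen G)⁻¹) ≤ l.dropLast.length := by
    apply wl_le (fun u hu => hok u ((List.dropLast_sublist l).subset hu))
    calc l.dropLast.prod = (l.dropLast.prod * tGen G) * (tGen G)⁻¹ := by group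
      _ = w * (tGen G)⁻¹ := by rw [hprod]
  have h2 : wordLength (fpGen G S) w
      ≤ wordLength (fpGen G S) (w * (tGen G)⁻¹) + 1 := by
    have := wl_mul_le hT (w * (tGen G)⁻¹) (tGen G)
    have ht1 : wordLength (fpGen G S) (tGen G) ≤ 1 := wl_gen_le_one hT (Or.inl tGen_mem)
    have he : w * (tGen G)⁻¹ * tGen G = w := by group
    rw [he] at this
    omega
  have h3 : l.dropLast.length + 1 = l.length := by
    rw [List.length_dropLast]
    have : 0 < l.length := List.length_pos_iff.mpr hne
    omega
  omega

theorem wd_one_left (x : FPZ G) : wordDist (fpGen G S) 1 x = wordLength (fpGen G S) x := by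
  rw [wordDist]; simp

theorem not_Pw_one (hT : Gen (fpGen G S)) {w : FPZ G} (hw : EndsWithT G S w) :
    ¬ Pw w 1 := by
  intro h1
  obtain ⟨l, hlen, hok, hp⟩ := exists_geodesic hT w
  have hlast := hw l hok hp hlen
  have hne : l ≠ [] := by intro h; rw [h] at hlast; simp at hlast
  obtain ⟨hh, hx⟩ := List.mem_getLast?_eq_getLast (show tGen G ∈ l.getLast? by rw [hlast]; rfl)
  have hsplit : l.dropLast ++ [tGen G] = l := by
    rw [hx]; exact List.dropLast_append_getLast hh
  have hprod : l.dropLast.prod * tGen G = w := by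
    rw [← hp, ← hsplit]; simp
  have hsp := split hT w l.dropLast 1 (w * (tGen G)⁻¹)
    (fun u hu => hok u ((List.dropLast_sublist l).subset hu)) h1 (Pw_v w)
    (by rw [one_mul]; calc l.dropLast.prod = (l.dropLast.prod * tGen G) * (tGen G)⁻¹ := by group
          _ = w * (tGen G)⁻¹ := by rw [hprod])
  rw [wd_self] at hsp
  have hd1w : wordDist (fpGen G S) 1 w = l.length := by rw [wd_one_left, ← hlen]
  have h3 : l.dropLast.length + 1 = l.length := by
    rw [List.length_dropLast]
    have : 0 < l.length := List.length_pos_iff.mpr hne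
    omega
  omega

theorem cone_formula (hT : Gen (fpGen G S)) {w : FPZ G} (hw : EndsWithT G S w)
    {x : FPZ G} (hx : Pw w x) :
    wordLength (fpGen G S) x = wordLength (fpGen G S) w + wordDist (fpGen G S) w x := by
  obtain ⟨l, hlen, hok, hp⟩ := exists_geodesic hT x
  have hsp := split' hT w l 1 x hok (not_Pw_one hT hw) hx (by rw [one_mul, hp])
  have h1 : wordDist (fpGen G S) 1 (w * (tGen G)⁻¹)
      = wordLength (fpGen G S) (w * (tGen G)⁻¹) := wd_one_left _
  have h2 := v_len hT hw
  have hle : wordLength (fpGen G S) x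
      ≤ wordLength (fpGen G S) w + wordDist (fpGen G S) w x := by
    have := wl_mul_le hT w (w⁻¹ * x)
    have he : w * (w⁻¹ * x) = x := by group
    rw [he] at this
    exact this
  omega

theorem dist_formula (hT : Gen (fpGen G S)) {w : FPZ G} (hw : EndsWithT G S w)
    {x a : FPZ G} (hx : Pw w x) (ha : ¬ Pw w a) :
    wordDist (fpGen G S) x a = wordDist (fpGen G S) x w + wordDist (fpGen G S) w a := by
  obtain ⟨l, hlen, hok, hp⟩ := exists_geodesic hT (x⁻¹ * a)
  have hsp := split hT w l x a hok hx ha (by rw [hp]; group)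
  have hwv : wordDist (fpGen G S) w (w * (tGen G)⁻¹) ≤ 1 := by
    rw [wordDist]
    have he : w⁻¹ * (w * (tGen G)⁻¹) = (tGen G)⁻¹ := by group
    rw [he]
    exact wl_gen_le_one hT (Or.inr (by rw [inv_inv]; exact tGen_mem))
  have htri := wd_triangle hT (T := fpGen G S) w (w * (tGen G)⁻¹) a
  have hle := wd_triangle hT (T := fpGen G S) x w a
  have hda : wordDist (fpGen G S) x a = wordLength (fpGen G S) (x⁻¹ * a) := rfl
  omega

theorem cone_eq_Pw (hT : Gen (fpGen G S)) {w : FPZ G} (hw : EndsWithT G S w) :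
    coneOf (fpGen G S) w = {x | Pw w x} := by
  ext x
  constructor
  · intro hx
    by_contra hpx
    obtain ⟨l, hlen, hok, hp⟩ := exists_geodesic hT (w⁻¹ * x)
    have hsp := split hT w l w x hok (Pw_w w) hpx (by rw [hp]; group)
    rw [wd_self] at hsp
    have hxle : wordLength (fpGen G S) x
        ≤ wordLength (fpGen G S) (w * (tGen G)⁻¹)
          + wordDist (fpGen G S) (w * (tGen G)⁻¹) x := by
      have := wl_mul_le hT (w * (tGen G)⁻¹) ((w * (tGen G)⁻¹)⁻¹ * x)
      have he : (w * (tGen G)⁻¹) * ((w * (tGen G)⁻¹)⁻¹ * x) = x := by group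
      rw [he] at this
      exact this
    have hcone : wordLength (fpGen G S) x
        = wordLength (fpGen G S) w + wordDist (fpGen G S) w x := hx
    have h2 := v_len hT hw
    have hdwx : wordDist (fpGen G S) w x = wordLength (fpGen G S) (w⁻¹ * x) := rfl
    omega
  · intro hx
    exact cone_formula hT hw hx

theorem cone_infinite (hT : Gen (fpGen G S)) {w : FPZ G} (hw : EndsWithT G S w) :
    (coneOf (fpGen G S) w).Infinite := by
  rw [cone_eq_Pw hT hw]
  refine Set.infinite_of_injective_forall_mem (f := fun k : ℕ => w * (tGen G) ^ k) ?_ ?_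
  · intro j k h
    simp only at h
    exact tGen_pow_injective (mul_left_cancel h)
  · intro k
    exact Pw_pow w k

end FPG

namespace FPA

open WL FP FP2 FPG

variable {G : Type} [Group G] {S : Set G}

theorem sa_refl (m : ℕ) (x : FPZ G) : SameAtom (fpGen G S) m x x := by
  intro a _ b _
  simp

theorem one_mem_ball (m : ℕ) : (1 : FPZ G) ∈ ball (fpGen G S) m := by
  show wordLength (fpGen G S) (1 : FPZ G) ≤ m
  simp

theorem mem_ball_iff {m : ℕ} {x : FPZ G} :
    x ∈ ball (fpGen G S) m ↔ wordLength (fpGen G S) x ≤ m := Iff.rfl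

theorem wd_one_right (hT : Gen (fpGen G S)) (x : FPZ G) :
    wordDist (fpGen G S) x 1 = wordLength (fpGen G S) x := by
  rw [wordDist, mul_one, wl_inv hT]

theorem cone_eq_atom (hT : Gen (fpGen G S)) {w : FPZ G} (hw : EndsWithT G S w) :
    coneOf (fpGen G S) w = atomOf (fpGen G S) (wordLength (fpGen G S) w) w := by
  ext y
  constructor
  · intro hy
    have hy' : Pw w y := by rw [cone_eq_Pw hT hw] at hy; exact hy
    have key : ∀ a ∈ ball (fpGen G S) (wordLength (fpGen G S) w),
        (wordDist (fpGen G S) w a : ℤ) - wordDist (fpGen G S) y a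
          = -(wordDist (fpGen G S) y w : ℤ) := by
      intro a ha
      by_cases hpa : Pw w a
      · have hfa := cone_formula hT hw hpa
        have hball : wordLength (fpGen G S) a ≤ wordLength (fpGen G S) w := ha
        have h0 : wordDist (fpGen G S) w a = 0 := by omega
        have h1 : a = w := by
          have h2 : w⁻¹ * a = 1 := eq_one_of_wl_eq_zero hT h0
          calc a = w * (w⁻¹ * a) := by group
            _ = w := by rw [h2, mul_one]
        subst h1
        rw [wd_self]
        simp
      · have hd := dist_formula hT hw hy' hpa
        rw [hd]
        push_cast
        ring
    intro a ha b hb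
    rw [key a ha, key b hb]
  · intro hy
    have h1 := hy 1 (one_mem_ball _) w
      (show wordLength (fpGen G S) w ≤ wordLength (fpGen G S) w from le_refl _)
    rw [wd_one_right hT, wd_one_right hT, wd_self] at h1
    have hsym : wordDist (fpGen G S) w y = wordDist (fpGen G S) y w := wd_symm hT _ _
    show wordLength (fpGen G S) y
        = wordLength (fpGen G S) w + wordDist (fpGen G S) w y
    omega

/-- atoms based at a cone point stay in the cone. -/
theorem atom_sub_cone (hT : Gen (fpGen G S)) {w : FPZ G} (hw : EndsWithT G S w)
    {m : ℕ} (hm : wordLength (fpGen G S) w ≤ m) {p q : FPZ G}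
    (hp : p ∈ coneOf (fpGen G S) w) (hs : SameAtom (fpGen G S) m p q) :
    q ∈ coneOf (fpGen G S) w := by
  have h1 := hs 1 (one_mem_ball _) w hm
  rw [wd_one_right hT, wd_one_right hT] at h1
  have hp' : wordLength (fpGen G S) p
      = wordLength (fpGen G S) w + wordDist (fpGen G S) w p := hp
  have hs1 : wordDist (fpGen G S) w p = wordDist (fpGen G S) p w := wd_symm hT _ _
  have hs2 : wordDist (fpGen G S) w q = wordDist (fpGen G S) q w := wd_symm hT _ _
  show wordLength (fpGen G S) q
      = wordLength (fpGen G S) w + wordDist (fpGen G S) w q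
  omega

theorem Pw_transport (w w' y : FPZ G) :
    Pw w' (w' * w⁻¹ * y) ↔ Pw w y := by
  rw [Pw, Pw]
  have h : tGen G * w'⁻¹ * (w' * w⁻¹ * y) = tGen G * w⁻¹ * y := by group
  rw [h]

theorem wd_transport_left (w w' x : FPZ G) :
    wordDist (fpGen G S) (w' * w⁻¹ * x) w' = wordDist (fpGen G S) x w := by
  rw [wordDist, wordDist]
  have h : (w' * w⁻¹ * x)⁻¹ * w' = x⁻¹ * w := by group
  rw [h]

theorem wd_transport_right (w w' a : FPZ G) :
    wordDist (fpGen G S) w' (w' * w⁻¹ * a) = wordDist (fpGen G S) w a := by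
  rw [wordDist, wordDist]
  have h : w'⁻¹ * (w' * w⁻¹ * a) = w⁻¹ * a := by group
  rw [h]

theorem samedir (hT : Gen (fpGen G S)) {w w' : FPZ G}
    (hw : EndsWithT G S w) (hw' : EndsWithT G S w') (k : ℕ)
    {x y : FPZ G} (hx : Pw w x) (hy : Pw w y)
    (hS : SameAtom (fpGen G S) (wordLength (fpGen G S) w + k) x y) :
    SameAtom (fpGen G S) (wordLength (fpGen G S) w' + k)
      (w' * w⁻¹ * x) (w' * w⁻¹ * y) := by
  have hgx : Pw w' (w' * w⁻¹ * x) := (Pw_transport w w' x).mpr hx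
  have hgy : Pw w' (w' * w⁻¹ * y) := (Pw_transport w w' y).mpr hy
  have key : ∀ a ∈ ball (fpGen G S) (wordLength (fpGen G S) w' + k),
      (wordDist (fpGen G S) (w' * w⁻¹ * x) a : ℤ)
          - wordDist (fpGen G S) (w' * w⁻¹ * y) a
        = (wordDist (fpGen G S) x w : ℤ) - wordDist (fpGen G S) y w := by
    intro a ha
    by_cases hpa : Pw w' a
    · have hga : w' * w⁻¹ * (w * w'⁻¹ * a) = a := by group
      have hpa0 : Pw w (w * w'⁻¹ * a) := by
        rw [← Pw_transport (w := w) (w' := w')]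
        rw [hga]
        exact hpa
      have hwl_a := cone_formula hT hw' hpa
      have hwl_a0 := cone_formula hT hw hpa0
      have hdd : wordDist (fpGen G S) w' a
          = wordDist (fpGen G S) w (w * w'⁻¹ * a) := by
        rw [wordDist, wordDist]
        have h : w'⁻¹ * a = w⁻¹ * (w * w'⁻¹ * a) := by group
        rw [h]
      have haball : wordLength (fpGen G S) a
          ≤ wordLength (fpGen G S) w' + k := ha
      have ha0ball : (w * w'⁻¹ * a) ∈ ball (fpGen G S) (wordLength (fpGen G S) w + k) := by
        show wordLength (fpGen G S) (w * w'⁻¹ * a) ≤ wordLength (fpGen G S) w + k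
        omega
      have hkey := hS (w * w'⁻¹ * a) ha0ball w
        (by show wordLength (fpGen G S) w ≤ wordLength (fpGen G S) w + k; omega)
      have h1 := wd_left_inv (T := fpGen G S) (w' * w⁻¹) x (w * w'⁻¹ * a)
      have h2 := wd_left_inv (T := fpGen G S) (w' * w⁻¹) y (w * w'⁻¹ * a)
      rw [mul_assoc, hga] at h1 h2
      rw [← mul_assoc] at h1 h2
      rw [h1, h2]
      exact hkey
    · have e1 := dist_formula hT hw' hgx hpa
      have e2 := dist_formula hT hw' hgy hpa
      have e3 := wd_transport_left (S := S) w w' x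
      have e4 := wd_transport_left (S := S) w w' y
      rw [e1, e2, e3, e4]
      push_cast
      ring
  intro a ha b hb
  rw [key a ha, key b hb]

end FPA

/-- If every minimum-length word for `w ∈ G ∗ ℤ` ends with `t`, then the cone `C(w)`
is an (infinite) atom in `𝒜_{|w|}(G ∗ ℤ)`; moreover any two such atoms have the same
type. -/
theorem cone_is_atom_in_free_product (G : Type) [Group G] [Nontrivial G]
    (S : Set G) (hSfin : S.Finite) (hgen : Subgroup.closure S = ⊤)
    (w w' : FPZ G) (hw : EndsWithT G S w) (hw' : EndsWithT G S w') :
    coneOf (fpGen G S) w ∈ InfAtoms (fpGen G S) (wordLength (fpGen G S) w) ∧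
    SameType (fpGen G S) (wordLength (fpGen G S) w) (coneOf (fpGen G S) w)
      (wordLength (fpGen G S) w') (coneOf (fpGen G S) w') := by
  have hT : WL.Gen (fpGen G S) := FP2.gen_fpGen hgen
  constructor
  · exact ⟨⟨w, FPA.cone_eq_atom hT hw⟩, FPG.cone_infinite hT hw⟩
  · refine ⟨w' * w⁻¹, ?_, ?_, ?_⟩
    · -- image of the cone is the other cone
      ext z
      simp only [Set.mem_image]
      constructor
      · rintro ⟨y, hy, rfl⟩
        rw [FPG.cone_eq_Pw hT hw']
        rw [FPG.cone_eq_Pw hT hw] at hy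
        exact (FPA.Pw_transport w w' y).mpr hy
      · intro hz
        rw [FPG.cone_eq_Pw hT hw'] at hz
        refine ⟨w * w'⁻¹ * z, ?_, by group⟩
        rw [FPG.cone_eq_Pw hT hw]
        exact (FPA.Pw_transport w' w z).mpr hz
    · -- balls clause
      intro k
      ext z
      simp only [Set.mem_image, Set.mem_inter_iff]
      constructor
      · rintro ⟨y, ⟨hyC, hyB⟩, rfl⟩
        rw [FPG.cone_eq_Pw hT hw] at hyC
        have hzP : FPG.Pw w' (w' * w⁻¹ * y) := (FPA.Pw_transport w w' y).mpr hyC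
        constructor
        · rw [FPG.cone_eq_Pw hT hw']
          exact hzP
        · show wordLength (fpGen G S) (w' * w⁻¹ * y)
            ≤ wordLength (fpGen G S) w' + k
          have h1 := FPG.cone_formula hT hw' hzP
          have h2 := FPG.cone_formula hT hw hyC
          have h3 := FPA.wd_transport_right (S := S) w w' y
          have hyB' : wordLength (fpGen G S) y ≤ wordLength (fpGen G S) w + k := hyB
          omega
      · rintro ⟨hzC, hzB⟩
        rw [FPG.cone_eq_Pw hT hw'] at hzC
        have hyP : FPG.Pw w (w * w'⁻¹ * z) := (FPA.Pw_transport w' w z).mpr hzC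
        refine ⟨w * w'⁻¹ * z, ⟨?_, ?_⟩, by group⟩
        · rw [FPG.cone_eq_Pw hT hw]
          exact hyP
        · show wordLength (fpGen G S) (w * w'⁻¹ * z)
            ≤ wordLength (fpGen G S) w + k
          have h1 := FPG.cone_formula hT hw hyP
          have h2 := FPG.cone_formula hT hw' hzC
          have h3 := FPA.wd_transport_right (S := S) w' w z
          have hzB' : wordLength (fpGen G S) z ≤ wordLength (fpGen G S) w' + k := hzB
          omega
    · -- sub-atoms clause
      intro k hk A' hA' hsub
      obtain ⟨⟨x, rfl⟩, hinf⟩ := hA'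
      have hx0 : x ∈ atomOf (fpGen G S) (wordLength (fpGen G S) w + k) x :=
        FPA.sa_refl _ _
      have hxP : FPG.Pw w x := by
        have := hsub hx0
        rwa [FPG.cone_eq_Pw hT hw] at this
      have hgxP : FPG.Pw w' (w' * w⁻¹ * x) := (FPA.Pw_transport w w' x).mpr hxP
      refine ⟨⟨⟨w' * w⁻¹ * x, ?_⟩, ?_⟩, ?_⟩
      · -- the image is an atom
        ext z
        simp only [Set.mem_image]
        constructor
        · rintro ⟨y, hy, rfl⟩
          have hyP : FPG.Pw w y := by
            have := hsub hy
            rwa [FPG.cone_eq_Pw hT hw] at this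
          exact FPA.samedir hT hw hw' k hxP hyP hy
        · intro hz
          have hzS : SameAtom (fpGen G S) (wordLength (fpGen G S) w' + k)
              (w' * w⁻¹ * x) z := hz
          have hgxC : (w' * w⁻¹ * x) ∈ coneOf (fpGen G S) w' := by
            rw [FPG.cone_eq_Pw hT hw']
            exact hgxP
          have hzC : z ∈ coneOf (fpGen G S) w' :=
            FPA.atom_sub_cone hT hw' (Nat.le_add_right _ _) hgxC hzS
          have hzP : FPG.Pw w' z := by rwa [FPG.cone_eq_Pw hT hw'] at hzC
          have hback := FPA.samedir hT hw' hw k hgxP hzP hzS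
          have he : w * w'⁻¹ * (w' * w⁻¹ * x) = x := by group
          rw [he] at hback
          exact ⟨w * w'⁻¹ * z, hback, by group⟩
      · -- infinite
        exact (Set.infinite_image_iff
          (fun a _ b _ h => mul_left_cancel h)).mpr hinf
      · -- contained in the other cone
        rintro z ⟨y, hy, rfl⟩
        have hyP : FPG.Pw w y := by
          have := hsub hy
          rwa [FPG.cone_eq_Pw hT hw] at this
        rw [FPG.cone_eq_Pw hT hw']
        exact (FPA.Pw_transport w w' y).mpr hyP

end
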